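/- arXiv:2102.08689 — 3 statements merged into one kernel-verified Lean document; each statement's English description precedes it below -/
import Mathlib

section
/- Let R' ⊆ ℤ² be a rectangle [x₁, x₂] × [y₁, y₂]. If a grid path (allowing wait moves) starts on the top side {(x, y₁) : x₁ ≤ x ≤ x₂}, ends on the bottom side {(x, y₂) : x₁ ≤ x ≤ x₂}, and every point of the path lies in R', and another such path starts on the left side {(x₁, y) : y₁ ≤ y ≤ y₂}, ends on the right side {(x₂, y) : y₁ ≤ y ≤ y₂}, with all points in R', then the two paths share at least one common vertex. -/
def manh (a b : ℤ × ℤ) : ℤ := |a.1 - b.1| + |a.2 - b.2|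

def inRect (x₁ x₂ y₁ y₂ : ℤ) (a : ℤ × ℤ) : Prop :=
  x₁ ≤ a.1 ∧ a.1 ≤ x₂ ∧ y₁ ≤ a.2 ∧ a.2 ≤ y₂

/-- Indicator: is the vector (x,y) "above" the cut (the cut being the ray
{y = 1/2, x ≥ 1/2} together with a piece of the x-axis)? -/
def S2 (x y : ℤ) : ℤ := if 1 ≤ y ∨ (y = 0 ∧ x ≤ -1) then 1 else 0

/-- Signed crossing number of a step from (ux,uy) to (wx,wy) across the ray. -/
def cr2 (ux uy wx wy : ℤ) : ℤ := if ux = wx ∧ 1 ≤ ux then S2 wx wy - S2 ux uy else 0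

lemma stepBound (a b : ℤ) (h : |a| + |b| ≤ 1) :
    -1 ≤ a ∧ a ≤ 1 ∧ -1 ≤ b ∧ b ≤ 1 ∧ (a = 0 ∨ b = 0) := by
  have h1 := abs_nonneg a
  have h2 := abs_nonneg b
  have h3 := le_abs_self a
  have h4 := neg_abs_le a
  have h5 := le_abs_self b
  have h6 := neg_abs_le b
  refine ⟨by linarith, by linarith, by linarith, by linarith, ?_⟩
  by_contra hc
  push_neg at hc
  have ha := Int.one_le_abs hc.1
  have hb := Int.one_le_abs hc.2
  linarith

lemma crL0 (ux uy wx wy : ℤ) (h : ux ≤ 0) : cr2 ux uy wx wy = 0 := by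
  unfold cr2
  split_ifs with h1
  · omega
  · rfl

lemma crD0 (ux uy wx wy : ℤ) (hu : uy ≤ 0) (hw : wy ≤ 0) : cr2 ux uy wx wy = 0 := by
  unfold cr2 S2
  split_ifs <;> omega

lemma crU (ux uy wx wy : ℤ) (h0u : 0 ≤ uy) (h0w : 0 ≤ wy)
    (hs : -1 ≤ wx - ux ∧ wx - ux ≤ 1 ∧ -1 ≤ wy - uy ∧ wy - uy ≤ 1 ∧ (wx = ux ∨ wy = uy))
    (hnu : ux ≠ 0 ∨ uy ≠ 0) (hnw : wx ≠ 0 ∨ wy ≠ 0) :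
    cr2 ux uy wx wy = S2 wx wy - S2 ux uy := by
  unfold cr2 S2
  split_ifs <;> omega

lemma crR (ux uy wx wy : ℤ) (h0u : 0 ≤ ux) (h0w : 0 ≤ wx)
    (hs : -1 ≤ wx - ux ∧ wx - ux ≤ 1 ∧ -1 ≤ wy - uy ∧ wy - uy ≤ 1 ∧ (wx = ux ∨ wy = uy))
    (hnu : ux ≠ 0 ∨ uy ≠ 0) (hnw : wx ≠ 0 ∨ wy ≠ 0) :
    cr2 ux uy wx wy = S2 wx wy - S2 ux uy := by
  unfold cr2 S2
  split_ifs <;> omega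

set_option maxHeartbeats 3200000 in
/-- No winding around a unit cell: going around an elementary square of the
time-grid, the signed crossing numbers balance. -/
lemma crSq (ux uy vx vy wx wy zx zy : ℤ)
    (hpar : ux + zx = vx + wx ∧ uy + zy = vy + wy)
    (ha : -1 ≤ vx - ux ∧ vx - ux ≤ 1 ∧ -1 ≤ vy - uy ∧ vy - uy ≤ 1 ∧ (vx = ux ∨ vy = uy))
    (hb : -1 ≤ wx - ux ∧ wx - ux ≤ 1 ∧ -1 ≤ wy - uy ∧ wy - uy ≤ 1 ∧ (wx = ux ∨ wy = uy))
    (h1 : ux ≠ 0 ∨ uy ≠ 0) (h2 : vx ≠ 0 ∨ vy ≠ 0)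
    (h3 : wx ≠ 0 ∨ wy ≠ 0) (h4 : zx ≠ 0 ∨ zy ≠ 0) :
    cr2 ux uy vx vy + cr2 vx vy zx zy = cr2 ux uy wx wy + cr2 wx wy zx zy := by
  unfold cr2 S2
  split_ifs <;> omega

lemma aux_crossing (x₁ x₂ y₁ y₂ : ℤ) (n m : ℕ) (P Q : ℕ → ℤ × ℤ)
    (hPstep : ∀ i : ℕ, -1 ≤ (P (i+1)).1 - (P i).1 ∧ (P (i+1)).1 - (P i).1 ≤ 1 ∧
      -1 ≤ (P (i+1)).2 - (P i).2 ∧ (P (i+1)).2 - (P i).2 ≤ 1 ∧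
      ((P (i+1)).1 = (P i).1 ∨ (P (i+1)).2 = (P i).2))
    (hQstep : ∀ j : ℕ, -1 ≤ (Q (j+1)).1 - (Q j).1 ∧ (Q (j+1)).1 - (Q j).1 ≤ 1 ∧
      -1 ≤ (Q (j+1)).2 - (Q j).2 ∧ (Q (j+1)).2 - (Q j).2 ≤ 1 ∧
      ((Q (j+1)).1 = (Q j).1 ∨ (Q (j+1)).2 = (Q j).2))
    (hPin : ∀ i : ℕ, x₁ ≤ (P i).1 ∧ (P i).1 ≤ x₂ ∧ y₁ ≤ (P i).2 ∧ (P i).2 ≤ y₂)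
    (hQin : ∀ j : ℕ, x₁ ≤ (Q j).1 ∧ (Q j).1 ≤ x₂ ∧ y₁ ≤ (Q j).2 ∧ (Q j).2 ≤ y₂)
    (hP0 : (P 0).2 = y₁) (hPn : (P n).2 = y₂)
    (hQ0 : (Q 0).1 = x₁) (hQm : (Q m).1 = x₂)
    (hne : ∀ i j : ℕ, (Q j).1 ≠ (P i).1 ∨ (Q j).2 ≠ (P i).2) : False := by
  set A : ℕ → ℤ := fun j => ∑ i ∈ Finset.range n,
    cr2 ((Q j).1 - (P i).1) ((Q j).2 - (P i).2)
      ((Q j).1 - (P (i+1)).1) ((Q j).2 - (P (i+1)).2) with hA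
  set T : ℕ → ℕ → ℤ := fun i j =>
    cr2 ((Q j).1 - (P i).1) ((Q j).2 - (P i).2)
      ((Q (j+1)).1 - (P i).1) ((Q (j+1)).2 - (P i).2) with hT
  have hnz : ∀ i j : ℕ, (Q j).1 - (P i).1 ≠ 0 ∨ (Q j).2 - (P i).2 ≠ 0 := by
    intro i j
    rcases hne i j with h | h
    · exact Or.inl (by omega)
    · exact Or.inr (by omega)
  have tele1 : ∀ j : ℕ, A (j+1) - A j = T n j - T 0 j := by
    intro j
    have h1 : A (j+1) - A j = ∑ i ∈ Finset.range n, (T (i+1) j - T i j) := by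
      simp only [hA, hT]
      rw [← Finset.sum_sub_distrib]
      apply Finset.sum_congr rfl
      intro i _
      have hkey := crSq ((Q j).1 - (P i).1) ((Q j).2 - (P i).2)
        ((Q j).1 - (P (i+1)).1) ((Q j).2 - (P (i+1)).2)
        ((Q (j+1)).1 - (P i).1) ((Q (j+1)).2 - (P i).2)
        ((Q (j+1)).1 - (P (i+1)).1) ((Q (j+1)).2 - (P (i+1)).2)
        (by constructor <;> ring)
        (by have := hPstep i; omega)
        (by have := hQstep j; omega)
        (hnz i j) (hnz (i+1) j) (hnz i (j+1)) (hnz (i+1) (j+1))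
      omega
    rw [h1, Finset.sum_range_sub (fun i => T i j)]
  have tele2 : A m - A 0 =
      (∑ j ∈ Finset.range m, T n j) - ∑ j ∈ Finset.range m, T 0 j := by
    calc A m - A 0 = ∑ j ∈ Finset.range m, (A (j+1) - A j) :=
          (Finset.sum_range_sub A m).symm
      _ = ∑ j ∈ Finset.range m, (T n j - T 0 j) :=
          Finset.sum_congr rfl (fun j _ => tele1 j)
      _ = _ := Finset.sum_sub_distrib _ _
  have hA0 : A 0 = 0 := by
    simp only [hA]
    apply Finset.sum_eq_zero
    intro i _
    apply crL0
    have h1 := hPin i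
    omega
  have hBn : (∑ j ∈ Finset.range m, T n j) = 0 := by
    apply Finset.sum_eq_zero
    intro j _
    simp only [hT]
    apply crD0
    · have h1 := hQin j; omega
    · have h1 := hQin (j+1); omega
  have hAm : A m = S2 ((Q m).1 - (P n).1) ((Q m).2 - (P n).2)
      - S2 ((Q m).1 - (P 0).1) ((Q m).2 - (P 0).2) := by
    simp only [hA]
    calc (∑ i ∈ Finset.range n,
        cr2 ((Q m).1 - (P i).1) ((Q m).2 - (P i).2)
          ((Q m).1 - (P (i+1)).1) ((Q m).2 - (P (i+1)).2))
        = ∑ i ∈ Finset.range n,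
          (S2 ((Q m).1 - (P (i+1)).1) ((Q m).2 - (P (i+1)).2)
            - S2 ((Q m).1 - (P i).1) ((Q m).2 - (P i).2)) := by
          apply Finset.sum_congr rfl
          intro i _
          apply crR
          · have h1 := hPin i; omega
          · have h1 := hPin (i+1); omega
          · have := hPstep i; omega
          · exact hnz i m
          · exact hnz (i+1) m
      _ = _ := Finset.sum_range_sub (fun i => S2 ((Q m).1 - (P i).1) ((Q m).2 - (P i).2)) n
  have hB0 : (∑ j ∈ Finset.range m, T 0 j) =
      S2 ((Q m).1 - (P 0).1) ((Q m).2 - (P 0).2)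
      - S2 ((Q 0).1 - (P 0).1) ((Q 0).2 - (P 0).2) := by
    simp only [hT]
    calc (∑ j ∈ Finset.range m,
        cr2 ((Q j).1 - (P 0).1) ((Q j).2 - (P 0).2)
          ((Q (j+1)).1 - (P 0).1) ((Q (j+1)).2 - (P 0).2))
        = ∑ j ∈ Finset.range m,
          (S2 ((Q (j+1)).1 - (P 0).1) ((Q (j+1)).2 - (P 0).2)
            - S2 ((Q j).1 - (P 0).1) ((Q j).2 - (P 0).2)) := by
          apply Finset.sum_congr rfl
          intro j _
          apply crU
          · have h1 := hQin j; omega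
          · have h1 := hQin (j+1); omega
          · have := hQstep j; omega
          · exact hnz 0 j
          · exact hnz 0 (j+1)
      _ = _ := Finset.sum_range_sub (fun j => S2 ((Q j).1 - (P 0).1) ((Q j).2 - (P 0).2)) m
  have hS1 : S2 ((Q 0).1 - (P 0).1) ((Q 0).2 - (P 0).2) = 1 := by
    have h1 := hQin 0
    have h2 := hPin 0
    have h3 := hnz 0 0
    unfold S2
    split_ifs with h <;> omega
  have hS0 : S2 ((Q m).1 - (P n).1) ((Q m).2 - (P n).2) = 0 := by
    have h1 := hQin m
    have h2 := hPin n
    unfold S2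
    split_ifs with h <;> omega
  rw [hA0, hBn, hAm, hB0] at tele2
  omega

theorem discrete_crossing (x₁ x₂ y₁ y₂ : ℤ) (hx : x₁ ≤ x₂) (hy : y₁ ≤ y₂)
    (n m : ℕ) (p : Fin (n + 1) → ℤ × ℤ) (q : Fin (m + 1) → ℤ × ℤ)
    (hpstep : ∀ i : Fin n, p i.succ = p i.castSucc ∨ manh (p i.succ) (p i.castSucc) = 1)
    (hqstep : ∀ j : Fin m, q j.succ = q j.castSucc ∨ manh (q j.succ) (q j.castSucc) = 1)
    (hp0 : (p 0).2 = y₁) (hpn : (p (Fin.last n)).2 = y₂)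
    (hpin : ∀ i, inRect x₁ x₂ y₁ y₂ (p i))
    (hq0 : (q 0).1 = x₁) (hqm : (q (Fin.last m)).1 = x₂)
    (hqin : ∀ j, inRect x₁ x₂ y₁ y₂ (q j)) :
    ∃ i j, p i = q j := by
  by_contra hcon
  push_neg at hcon
  have hlt : ∀ i : ℕ, min i n < n + 1 := fun i => Nat.lt_succ_of_le (Nat.min_le_right i n)
  have hltm : ∀ j : ℕ, min j m < m + 1 := fun j => Nat.lt_succ_of_le (Nat.min_le_right j m)
  set P : ℕ → ℤ × ℤ := fun i => p ⟨min i n, hlt i⟩ with hP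
  set Q : ℕ → ℤ × ℤ := fun j => q ⟨min j m, hltm j⟩ with hQ
  have hPe : ∀ i : ℕ, P i = p ⟨min i n, hlt i⟩ := fun i => by rw [hP]
  have hQe : ∀ j : ℕ, Q j = q ⟨min j m, hltm j⟩ := fun j => by rw [hQ]
  apply aux_crossing x₁ x₂ y₁ y₂ n m P Q
  · -- P steps
    intro i
    rcases Nat.lt_or_ge i n with h | h
    · have e1 : P (i+1) = p ((⟨i, h⟩ : Fin n).succ) := by
        rw [hPe]; exact congrArg p (Fin.ext (by simp; omega))
      have e2 : P i = p ((⟨i, h⟩ : Fin n).castSucc) := by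
        rw [hPe]; exact congrArg p (Fin.ext (by simp; omega))
      rw [e1, e2]
      rcases hpstep ⟨i, h⟩ with he | hm
      · rw [he]; omega
      · unfold manh at hm
        have := stepBound _ _ (le_of_eq hm)
        omega
    · have e : P (i+1) = P i := by
        rw [hPe, hPe]; exact congrArg p (Fin.ext (by simp; omega))
      rw [e]; omega
  · -- Q steps
    intro j
    rcases Nat.lt_or_ge j m with h | h
    · have e1 : Q (j+1) = q ((⟨j, h⟩ : Fin m).succ) := by
        rw [hQe]; exact congrArg q (Fin.ext (by simp; omega))
      have e2 : Q j = q ((⟨j, h⟩ : Fin m).castSucc) := by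
        rw [hQe]; exact congrArg q (Fin.ext (by simp; omega))
      rw [e1, e2]
      rcases hqstep ⟨j, h⟩ with he | hm
      · rw [he]; omega
      · unfold manh at hm
        have := stepBound _ _ (le_of_eq hm)
        omega
    · have e : Q (j+1) = Q j := by
        rw [hQe, hQe]; exact congrArg q (Fin.ext (by simp; omega))
      rw [e]; omega
  · intro i
    have e : P i = p ⟨min i n, hlt i⟩ := hPe i
    rw [e]
    exact hpin _
  · intro j
    have e : Q j = q ⟨min j m, hltm j⟩ := hQe j
    rw [e]
    exact hqin _
  · have e : P 0 = p 0 := by rw [hPe]; exact congrArg p (Fin.ext (by simp))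
    rw [e]; exact hp0
  · have e : P n = p (Fin.last n) := by rw [hPe]; exact congrArg p (Fin.ext (by simp))
    rw [e]; exact hpn
  · have e : Q 0 = q 0 := by rw [hQe]; exact congrArg q (Fin.ext (by simp))
    rw [e]; exact hq0
  · have e : Q m = q (Fin.last m) := by rw [hQe]; exact congrArg q (Fin.ext (by simp))
    rw [e]; exact hqm
  · intro i j
    by_contra hc
    push_neg at hc
    apply hcon ⟨min i n, hlt i⟩ ⟨min j m, hltm j⟩
    have : P i = Q j := Prod.ext hc.1.symm hc.2.symm
    rw [hPe, hQe] at this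
    exact this
end

section
/- Main rectangle conflict theorem (abstract form): Let R' = [x₁, x₂] × [y₁, y₂] ⊆ ℤ², let rt ∈ ℤ be a root time, let u ∈ ℤ², and set ot(v) = rt + Manhattan(u, v). Let 0 ≤ k₁, k₂ ≤ k be integers. Suppose agent 1 is a timed grid walk p₁ : ℤ → ℤ² (consecutive positions equal or Manhattan-adjacent) that crosses R' from the top side to the bottom side, staying inside R' during the crossing, and visits every vertex v ∈ R' on its route at a time in [ot(v), ot(v) + k₂]. Suppose agent 2 is a timed grid walk p₂ crossing R' from the left side to the right side, staying inside R', visiting each of its vertices v at a time in [ot(v), ot(v) + k₁]. Then there exist a vertex v ∈ R' and times t₁, t₂ with p₁(t₁) = p₂(t₂) = v and |t₁ - t₂| ≤ k. -/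
def ww (p q : ℤ × ℤ) : ℤ :=
  if q.1 = p.1 ∧ 1 ≤ p.1 ∧ p.2 = 0 ∧ q.2 = 1 then 1
  else if q.1 = p.1 ∧ 1 ≤ p.1 ∧ p.2 = 1 ∧ q.2 = 0 then -1 else 0
lemma ww_mk (x y x' y' : ℤ) : ww (x,y) (x',y') =
    if x' = x ∧ 1 ≤ x ∧ y = 0 ∧ y' = 1 then 1
    else if x' = x ∧ 1 ≤ x ∧ y = 1 ∧ y' = 0 then -1 else 0 := rfl
lemma ww_self (x y : ℤ) : ww (x,y) (x,y) = 0 := by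
  rw [ww_mk]; split_ifs <;> omega
lemma ww_right (x y : ℤ) : ww (x,y) (x+1, y) = 0 := by
  rw [ww_mk]; split_ifs <;> omega
lemma ww_left (x y : ℤ) : ww (x,y) (x + -1, y) = 0 := by
  rw [ww_mk]; split_ifs <;> omega
lemma ww_up (x y : ℤ) : ww (x,y) (x, y+1) = if 1 ≤ x ∧ y = 0 then 1 else 0 := by
  rw [ww_mk]; split_ifs <;> omega
lemma ww_down (x y : ℤ) : ww (x,y) (x, y + -1) = if 1 ≤ x ∧ y = 1 then -1 else 0 := by
  rw [ww_mk]; split_ifs <;> omega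
lemma ww_left' (x y : ℤ) : ww (x+1, y) (x, y) = 0 := by
  rw [ww_mk]; split_ifs <;> omega
lemma ww_right' (x y : ℤ) : ww (x + -1, y) (x, y) = 0 := by
  rw [ww_mk]; split_ifs <;> omega
lemma ww_up' (x y : ℤ) : ww (x, y + -1) (x, y) = if 1 ≤ x ∧ y + -1 = 0 then 1 else 0 := by
  rw [ww_mk]; split_ifs <;> omega
lemma ww_down' (x y : ℤ) : ww (x, y + 1) (x, y) = if 1 ≤ x ∧ y + 1 = 1 then -1 else 0 := by
  rw [ww_mk]; split_ifs <;> omega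
def vstep (v : ℤ × ℤ) : Prop := v = (0,0) ∨ |v.1| + |v.2| = 1
lemma vstep_cases {v : ℤ × ℤ} (h : vstep v) :
    v = (0,0) ∨ v = (1,0) ∨ v = (-1,0) ∨ v = (0,1) ∨ v = (0,-1) := by
  obtain ⟨a,b⟩ := v
  simp only [vstep, Prod.mk.injEq] at h
  rcases abs_cases a with ⟨ha, _⟩ | ⟨ha, _⟩ <;> rcases abs_cases b with ⟨hb, _⟩ | ⟨hb, _⟩ <;>
    rw [ha, hb] at h <;> simp only [Prod.mk.injEq] <;> omega
lemma vstep_neg {v : ℤ × ℤ} (h : vstep v) : vstep (-v) := by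
  rcases h with h | h
  · left; rw [h]; rfl
  · right; simpa using h
lemma ww_square {p α β : ℤ × ℤ} (hα : vstep α) (hβ : vstep β)
    (h0 : p ≠ (0,0)) (h1 : p + α ≠ (0,0)) (h2 : p + β ≠ (0,0)) (h3 : p + α + β ≠ (0,0)) :
    ww p (p + α) + ww (p + α) (p + α + β) = ww p (p + β) + ww (p + β) (p + α + β) := by
  obtain ⟨x, y⟩ := p
  simp only [ne_eq, Prod.mk.injEq, not_and] at h0
  rcases vstep_cases hα with rfl | rfl | rfl | rfl | rfl <;>
    rcases vstep_cases hβ with rfl | rfl | rfl | rfl | rfl <;>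
    simp only [Prod.mk_add_mk, add_zero, ne_eq, Prod.mk.injEq, not_and] at h1 h2 h3 <;>
    simp only [Prod.mk_add_mk, add_zero, add_neg_cancel_right, neg_add_cancel_right,
      ww_self, ww_right, ww_left, ww_up, ww_down, ww_left', ww_right', ww_up', ww_down'] <;>
    (split_ifs <;> omega)

lemma vstep_coord {p q : ℤ × ℤ} (h : vstep (q - p)) :
    (q.1 - p.1 = 0 ∧ q.2 - p.2 = 0) ∨ (q.1 - p.1 = 1 ∧ q.2 - p.2 = 0) ∨
    (q.1 - p.1 = -1 ∧ q.2 - p.2 = 0) ∨ (q.1 - p.1 = 0 ∧ q.2 - p.2 = 1) ∨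
    (q.1 - p.1 = 0 ∧ q.2 - p.2 = -1) := by
  rcases vstep_cases h with hc | hc | hc | hc | hc <;>
    rw [Prod.ext_iff] at hc <;>
    simp only [Prod.fst_sub, Prod.snd_sub] at hc <;> tauto

lemma ne_coord {p : ℤ × ℤ} (h : p ≠ (0,0)) : ¬(p.1 = 0 ∧ p.2 = 0) := by
  rw [Ne, Prod.ext_iff] at h; simpa using h

lemma ww_xnonpos {p q : ℤ × ℤ} (h : p.1 ≤ 0) : ww p q = 0 := by
  unfold ww; split_ifs <;> omega

lemma ww_ynonpos {p q : ℤ × ℤ} (hp : p.2 ≤ 0) (hq : q.2 ≤ 0) : ww p q = 0 := by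
  unfold ww; split_ifs <;> omega

lemma ww_phi {p q : ℤ × ℤ} (h : vstep (q - p)) (hp : p ≠ (0,0)) (hq : q ≠ (0,0))
    (hp1 : 0 ≤ p.1) (hq1 : 0 ≤ q.1) :
    ww p q = (if 1 ≤ q.2 then (1:ℤ) else 0) - (if 1 ≤ p.2 then (1:ℤ) else 0) := by
  have hco := vstep_coord h
  have hp' := ne_coord hp
  have hq' := ne_coord hq
  unfold ww; split_ifs <;> omega

lemma ww_psi {p q : ℤ × ℤ} (h : vstep (q - p)) (hp : p ≠ (0,0)) (hq : q ≠ (0,0))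
    (hp2 : 0 ≤ p.2) (hq2 : 0 ≤ q.2) :
    ww p q = (if 1 ≤ q.1 ∧ q.2 = 0 then (-1:ℤ) else 0)
      - (if 1 ≤ p.1 ∧ p.2 = 0 then (-1:ℤ) else 0) := by
  have hco := vstep_coord h
  have hp' := ne_coord hp
  have hq' := ne_coord hq
  unfold ww; split_ifs <;> omega

lemma cross (m n : ℕ) (A B : ℕ → ℤ × ℤ)
    (hA : ∀ i, vstep (A (i+1) - A i)) (hB : ∀ j, vstep (B (j+1) - B j))
    (hne : ∀ i j, A i - B j ≠ (0,0))
    (hL : ∀ i, (B 0).1 ≤ (A i).1)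
    (hT : (A 0).2 ≤ (B 0).2)
    (hBot : ∀ j, (B j).2 ≤ (A m).2)
    (hR : ∀ i, (A i).1 ≤ (B n).1)
    (hT2 : ∀ j, (A 0).2 ≤ (B j).2) : False := by
  have hBstep : ∀ j, vstep (B j - B (j+1)) := by
    intro j; have := vstep_neg (hB j); rwa [neg_sub] at this
  have sq : ∀ i j : ℕ,
      ww (A i - B j) (A (i+1) - B j) + ww (A (i+1) - B j) (A (i+1) - B (j+1))
      = ww (A i - B j) (A i - B (j+1)) + ww (A i - B (j+1)) (A (i+1) - B (j+1)) := by
    intro i j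
    have e1 : A (i+1) - B j = (A i - B j) + (A (i+1) - A i) := by ring
    have e2 : A i - B (j+1) = (A i - B j) + (B j - B (j+1)) := by ring
    have e3 : A (i+1) - B (j+1) = (A i - B j) + (A (i+1) - A i) + (B j - B (j+1)) := by ring
    have key := ww_square (hA i) (hBstep j) (hne i j) (e1 ▸ hne (i+1) j)
      (e2 ▸ hne i (j+1)) (e3 ▸ hne (i+1) (j+1))
    rw [e1, e2, e3]
    exact key
  have row : ∀ j : ℕ,
      (∑ i ∈ Finset.range m, ww (A i - B (j+1)) (A (i+1) - B (j+1)))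
        - (∑ i ∈ Finset.range m, ww (A i - B j) (A (i+1) - B j))
      = ww (A m - B j) (A m - B (j+1)) - ww (A 0 - B j) (A 0 - B (j+1)) := by
    intro j
    have t1 : ∑ i ∈ Finset.range m,
        (ww (A (i+1) - B j) (A (i+1) - B (j+1)) - ww (A i - B j) (A i - B (j+1)))
        = ww (A m - B j) (A m - B (j+1)) - ww (A 0 - B j) (A 0 - B (j+1)) :=
      Finset.sum_range_sub (fun i => ww (A i - B j) (A i - B (j+1))) m
    have t2 : ∑ i ∈ Finset.range m,
        (ww (A i - B (j+1)) (A (i+1) - B (j+1)) - ww (A i - B j) (A (i+1) - B j))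
        = ∑ i ∈ Finset.range m,
        (ww (A (i+1) - B j) (A (i+1) - B (j+1)) - ww (A i - B j) (A i - B (j+1))) :=
      Finset.sum_congr rfl (fun i _ => by have := sq i j; linarith)
    rw [← Finset.sum_sub_distrib, t2, t1]
  have tot : ∑ j ∈ Finset.range n,
      ((∑ i ∈ Finset.range m, ww (A i - B (j+1)) (A (i+1) - B (j+1)))
        - (∑ i ∈ Finset.range m, ww (A i - B j) (A (i+1) - B j)))
      = (∑ i ∈ Finset.range m, ww (A i - B n) (A (i+1) - B n))
        - (∑ i ∈ Finset.range m, ww (A i - B 0) (A (i+1) - B 0)) :=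
    Finset.sum_range_sub (fun j => ∑ i ∈ Finset.range m, ww (A i - B j) (A (i+1) - B j)) n
  have tot2 : (∑ j ∈ Finset.range n, ww (A m - B j) (A m - B (j+1)))
      - (∑ j ∈ Finset.range n, ww (A 0 - B j) (A 0 - B (j+1)))
      = (∑ i ∈ Finset.range m, ww (A i - B n) (A (i+1) - B n))
        - (∑ i ∈ Finset.range m, ww (A i - B 0) (A (i+1) - B 0)) := by
    rw [← Finset.sum_sub_distrib, ← tot]
    exact Finset.sum_congr rfl (fun j _ => (row j).symm)
  -- evaluate the four sums
  have hSn : ∑ i ∈ Finset.range m, ww (A i - B n) (A (i+1) - B n) = 0 :=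
    Finset.sum_eq_zero (fun i _ => ww_xnonpos (by
      rw [Prod.fst_sub]; have := hR i; omega))
  have hU : ∑ j ∈ Finset.range n, ww (A 0 - B j) (A 0 - B (j+1)) = 0 :=
    Finset.sum_eq_zero (fun j _ => ww_ynonpos
      (by rw [Prod.snd_sub]; have := hT2 j; omega)
      (by rw [Prod.snd_sub]; have := hT2 (j+1); omega))
  have hS0 : ∑ i ∈ Finset.range m, ww (A i - B 0) (A (i+1) - B 0)
      = (if 1 ≤ (A m - B 0).2 then (1:ℤ) else 0)
        - (if 1 ≤ (A 0 - B 0).2 then (1:ℤ) else 0) := by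
    have t3 : ∑ i ∈ Finset.range m,
        ((if 1 ≤ (A (i+1) - B 0).2 then (1:ℤ) else 0)
          - (if 1 ≤ (A i - B 0).2 then (1:ℤ) else 0))
        = (if 1 ≤ (A m - B 0).2 then (1:ℤ) else 0)
          - (if 1 ≤ (A 0 - B 0).2 then (1:ℤ) else 0) :=
      Finset.sum_range_sub (fun i => if 1 ≤ (A i - B 0).2 then (1:ℤ) else 0) m
    rw [← t3]
    refine Finset.sum_congr rfl (fun i _ => ww_phi ?_ (hne i 0) (hne (i+1) 0) ?_ ?_)
    · have e : (A (i+1) - B 0) - (A i - B 0) = A (i+1) - A i := by ring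
      rw [e]; exact hA i
    · rw [Prod.fst_sub]; have := hL i; omega
    · rw [Prod.fst_sub]; have := hL (i+1); omega
  have hTm : ∑ j ∈ Finset.range n, ww (A m - B j) (A m - B (j+1))
      = (if 1 ≤ (A m - B n).1 ∧ (A m - B n).2 = 0 then (-1:ℤ) else 0)
        - (if 1 ≤ (A m - B 0).1 ∧ (A m - B 0).2 = 0 then (-1:ℤ) else 0) := by
    have t4 : ∑ j ∈ Finset.range n,
        ((if 1 ≤ (A m - B (j+1)).1 ∧ (A m - B (j+1)).2 = 0 then (-1:ℤ) else 0)
          - (if 1 ≤ (A m - B j).1 ∧ (A m - B j).2 = 0 then (-1:ℤ) else 0))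
        = (if 1 ≤ (A m - B n).1 ∧ (A m - B n).2 = 0 then (-1:ℤ) else 0)
          - (if 1 ≤ (A m - B 0).1 ∧ (A m - B 0).2 = 0 then (-1:ℤ) else 0) :=
      Finset.sum_range_sub (fun j => if 1 ≤ (A m - B j).1 ∧ (A m - B j).2 = 0 then (-1:ℤ) else 0) n
    rw [← t4]
    refine Finset.sum_congr rfl (fun j _ => ww_psi ?_ (hne m j) (hne m (j+1)) ?_ ?_)
    · have e : (A m - B (j+1)) - (A m - B j) = -(B (j+1) - B j) := by ring
      rw [e]; exact vstep_neg (hB j)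
    · rw [Prod.snd_sub]; have := hBot j; omega
    · rw [Prod.snd_sub]; have := hBot (j+1); omega
  rw [hSn, hS0, hU, hTm] at tot2
  have hpsin : ¬(1 ≤ (A m - B n).1 ∧ (A m - B n).2 = 0) := by
    rintro ⟨h1', _⟩; rw [Prod.fst_sub] at h1'; have := hR m; omega
  have hphi0 : ¬(1 ≤ (A 0 - B 0).2) := by
    rw [Prod.snd_sub]; omega
  have hP' := ne_coord (hne m 0)
  have hP1 : 0 ≤ (A m - B 0).1 := by rw [Prod.fst_sub]; have := hL m; omega
  have hP2 : 0 ≤ (A m - B 0).2 := by rw [Prod.snd_sub]; have := hBot 0; omega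
  rw [if_neg hpsin, if_neg hphi0] at tot2
  split_ifs at tot2 <;> omega

lemma clamp_step (p : ℤ → ℤ × ℤ)
    (hstep : ∀ t : ℤ, p (t + 1) = p t ∨ manh (p (t + 1)) (p t) = 1)
    (s M : ℤ) (i : ℕ) :
    vstep (p (s + min ((i:ℤ)+1) M) - p (s + min (i:ℤ) M)) := by
  by_cases h : (i:ℤ) < M
  · have e1 : s + min ((i:ℤ)+1) M = (s + min (i:ℤ) M) + 1 := by omega
    rw [e1]
    rcases hstep (s + min (i:ℤ) M) with h' | h'
    · left; rw [h', sub_self]; rfl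
    · right; rw [Prod.fst_sub, Prod.snd_sub]; exact h'
  · have e1 : min ((i:ℤ)+1) M = min (i:ℤ) M := by omega
    rw [e1, sub_self]; left; rfl

theorem rectangle_conflict (x₁ x₂ y₁ y₂ : ℤ) (hx : x₁ ≤ x₂) (hy : y₁ ≤ y₂)
    (rt : ℤ) (u : ℤ × ℤ) (k₁ k₂ k : ℤ)
    (hk₁ : 0 ≤ k₁) (hk₂ : 0 ≤ k₂) (hk₁k : k₁ ≤ k) (hk₂k : k₂ ≤ k)
    (p₁ p₂ : ℤ → ℤ × ℤ)
    (hstep₁ : ∀ t : ℤ, p₁ (t + 1) = p₁ t ∨ manh (p₁ (t + 1)) (p₁ t) = 1)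
    (hstep₂ : ∀ t : ℤ, p₂ (t + 1) = p₂ t ∨ manh (p₂ (t + 1)) (p₂ t) = 1)
    (s₁ s₁' : ℤ) (hs₁ : s₁ ≤ s₁')
    (hcross₁ : (p₁ s₁).2 = y₁ ∧ (p₁ s₁').2 = y₂ ∧
      ∀ t, s₁ ≤ t → t ≤ s₁' → inRect x₁ x₂ y₁ y₂ (p₁ t))
    (htime₁ : ∀ t, s₁ ≤ t → t ≤ s₁' →
      rt + manh u (p₁ t) ≤ t ∧ t ≤ rt + manh u (p₁ t) + k₂)
    (s₂ s₂' : ℤ) (hs₂ : s₂ ≤ s₂')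
    (hcross₂ : (p₂ s₂).1 = x₁ ∧ (p₂ s₂').1 = x₂ ∧
      ∀ t, s₂ ≤ t → t ≤ s₂' → inRect x₁ x₂ y₁ y₂ (p₂ t))
    (htime₂ : ∀ t, s₂ ≤ t → t ≤ s₂' →
      rt + manh u (p₂ t) ≤ t ∧ t ≤ rt + manh u (p₂ t) + k₁) :
    ∃ (v : ℤ × ℤ) (t₁ t₂ : ℤ), inRect x₁ x₂ y₁ y₂ v ∧
      p₁ t₁ = v ∧ p₂ t₂ = v ∧ |t₁ - t₂| ≤ k := by
  obtain ⟨ha1, ha2, hain⟩ := hcross₁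
  obtain ⟨hb1, hb2, hbin⟩ := hcross₂
  by_contra hcon
  push_neg at hcon
  have hM : (0:ℤ) ≤ s₁' - s₁ := by omega
  have hN : (0:ℤ) ≤ s₂' - s₂ := by omega
  have hAm : s₁ + min ((((s₁' - s₁).toNat : ℕ)):ℤ) (s₁' - s₁) = s₁' := by omega
  have hBn : s₂ + min ((((s₂' - s₂).toNat : ℕ)):ℤ) (s₂' - s₂) = s₂' := by omega
  have hA0 : s₁ + min (((0:ℕ)):ℤ) (s₁' - s₁) = s₁ := by
    simp only [Nat.cast_zero]; omega
  have hB0 : s₂ + min (((0:ℕ)):ℤ) (s₂' - s₂) = s₂ := by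
    simp only [Nat.cast_zero]; omega
  have hbd₁ : ∀ i : ℕ, s₁ ≤ s₁ + min (i:ℤ) (s₁' - s₁) ∧ s₁ + min (i:ℤ) (s₁' - s₁) ≤ s₁' := by
    intro i; omega
  have hbd₂ : ∀ j : ℕ, s₂ ≤ s₂ + min (j:ℤ) (s₂' - s₂) ∧ s₂ + min (j:ℤ) (s₂' - s₂) ≤ s₂' := by
    intro j; omega
  refine cross (s₁' - s₁).toNat (s₂' - s₂).toNat
    (fun i => p₁ (s₁ + min (i : ℤ) (s₁' - s₁)))
    (fun j => p₂ (s₂ + min (j : ℤ) (s₂' - s₂))) ?_ ?_ ?_ ?_ ?_ ?_ ?_ ?_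
  · intro i; push_cast; exact clamp_step p₁ hstep₁ s₁ (s₁' - s₁) i
  · intro j; push_cast; exact clamp_step p₂ hstep₂ s₂ (s₂' - s₂) j
  · intro i j heq
    have heq' : p₁ (s₁ + min (i:ℤ) (s₁' - s₁)) = p₂ (s₂ + min (j:ℤ) (s₂' - s₂)) := by
      have h0 : p₁ (s₁ + min (i:ℤ) (s₁' - s₁)) - p₂ (s₂ + min (j:ℤ) (s₂' - s₂)) = 0 := heq
      exact sub_eq_zero.mp h0
    have hv := hain _ (hbd₁ i).1 (hbd₁ i).2
    have h1t := htime₁ _ (hbd₁ i).1 (hbd₁ i).2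
    have h2t := htime₂ _ (hbd₂ j).1 (hbd₂ j).2
    rw [heq'] at h1t
    have hk' := hcon (p₂ (s₂ + min (j:ℤ) (s₂' - s₂))) (s₁ + min (i:ℤ) (s₁' - s₁))
      (s₂ + min (j:ℤ) (s₂' - s₂)) (heq' ▸ hv) heq' rfl
    rcases abs_cases ((s₁ + min (i:ℤ) (s₁' - s₁)) - (s₂ + min (j:ℤ) (s₂' - s₂))) with
      ⟨he, _⟩ | ⟨he, _⟩ <;> rw [he] at hk' <;> omega
  · intro i; rw [hB0, hb1]; exact (hain _ (hbd₁ i).1 (hbd₁ i).2).1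
  · rw [hA0, ha1]; exact (hbin _ (hbd₂ 0).1 (hbd₂ 0).2).2.2.1
  · intro j; rw [hAm, ha2]; exact (hbin _ (hbd₂ j).1 (hbd₂ j).2).2.2.2
  · intro i; rw [hBn, hb2]; exact (hain _ (hbd₁ i).1 (hbd₁ i).2).2.1
  · intro j; rw [hA0, ha1]; exact (hbin _ (hbd₂ j).1 (hbd₂ j).2).2.2.1
end

section
/- If a grid walk p₁ crosses rectangle R' top-to-bottom inside R' and a grid walk p₂ crosses R' left-to-right inside R', then restricting to the crossing segments, there exist indices i, j with p₁(i) = p₂(j) (a common vertex), and moreover this common vertex can be chosen so that it lies on both walks' crossing segments simultaneously; in particular the set of rows visited by p₁ includes all rows of R' and the set of columns visited by p₂ includes all columns of R'. -/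
/-- A "small" displacement: zero or a unit axis step. -/
def Sml (dx dy : ℤ) : Prop :=
  (dx = 0 ∧ dy = 0) ∨ (dx = 1 ∧ dy = 0) ∨ (dx = -1 ∧ dy = 0) ∨
  (dx = 0 ∧ dy = 1) ∨ (dx = 0 ∧ dy = -1)

/-- Crossing count of the step `(u,v) → (u',v')` over the ray just above the
negative x-axis (crossings of the strip `0 < y < 1` at `x ≤ -1`). -/
def c4 (u v u' v' : ℤ) : ℤ :=
  if v = 0 ∧ v' = 1 ∧ u ≤ -1 ∧ u' = u then 1
  else if v = 1 ∧ v' = 0 ∧ u ≤ -1 ∧ u' = u then -1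
  else 0

/-- Potential for `c4` on the left half plane minus the origin. -/
def hpot (_u v : ℤ) : ℤ := if 1 ≤ v then 1 else 0

/-- Potential for `c4` on the upper half plane minus the origin. -/
def gpot (u v : ℤ) : ℤ := if v = 0 ∧ u ≤ -1 then -1 else 0

lemma sml_of_step {a b : ℤ × ℤ} (h : b = a ∨ manh b a = 1) :
    Sml (b.1 - a.1) (b.2 - a.2) := by
  rcases h with h | h
  · subst h; unfold Sml; omega
  · unfold manh at h
    unfold Sml
    rcases abs_cases (b.1 - a.1) with ⟨h1, h1'⟩ | ⟨h1, h1'⟩ <;>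
      rcases abs_cases (b.2 - a.2) with ⟨h2, h2'⟩ | ⟨h2, h2'⟩ <;> omega

lemma sml_le {dx dy : ℤ} (h : Sml dx dy) : dy ≤ 1 ∧ dx ≤ 1 := by
  unfold Sml at h; omega

lemma c4_null_h (u v u' v' : ℤ) (h : v' = v) : c4 u v u' v' = 0 := by
  unfold c4; split_ifs <;> omega

lemma c4_zero_right (u v u' v' : ℤ) (hu : 0 ≤ u) : c4 u v u' v' = 0 := by
  unfold c4; split_ifs <;> omega

lemma c4_hshift (u u₂ a b : ℤ) (ht : -1 ≤ u₂ - u) (ht' : u₂ - u ≤ 1)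
    (h1 : ¬(u = 0 ∧ a = 0)) (h2 : ¬(u = 0 ∧ b = 0))
    (h3 : ¬(u₂ = 0 ∧ a = 0)) (h4 : ¬(u₂ = 0 ∧ b = 0)) :
    c4 u₂ a u₂ b = c4 u a u b := by
  unfold c4; split_ifs <;> omega

lemma c4_vspec (u a b : ℤ) (hu : u ≤ -1) (hab : b = a + 1 ∨ b = a - 1) :
    (a = 0 ∧ b = 1 ∧ c4 u a u b = 1) ∨ (a = 1 ∧ b = 0 ∧ c4 u a u b = -1) ∨
    ((2 ≤ a + b ∨ a + b ≤ -1) ∧ c4 u a u b = 0) := by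
  unfold c4; split_ifs <;> omega

lemma sq_vert (u v v' z z' : ℤ)
    (hdd : v' - v = 1 ∨ v' - v = -1) (hee : v - z = 1 ∨ v - z = -1)
    (hc2 : v' - z' = v - z)
    (h00 : ¬(u = 0 ∧ v = 0)) (h10 : ¬(u = 0 ∧ v' = 0))
    (h01 : ¬(u = 0 ∧ z = 0)) (h11 : ¬(u = 0 ∧ z' = 0)) :
    c4 u v u v' - c4 u z u z' = c4 u v u z - c4 u v' u z' := by
  by_cases hu : 0 ≤ u
  · have t1 := c4_zero_right u v u v' hu
    have t2 := c4_zero_right u z u z' hu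
    have t3 := c4_zero_right u v u z hu
    have t4 := c4_zero_right u v' u z' hu
    omega
  · have hu2 : u ≤ -1 := by omega
    have s1 := c4_vspec u v v' hu2 (by omega)
    have s2 := c4_vspec u z z' hu2 (by omega)
    have s3 := c4_vspec u v z hu2 (by omega)
    have s4 := c4_vspec u v' z' hu2 (by omega)
    clear h00 h10 h01 h11
    omega

set_option maxHeartbeats 1000000 in
/-- The key square identity: the crossing numbers around an elementary square
of the product of the two walks cancel, provided no corner is the origin. -/
lemma square_id (u v u' v' w z w' z' : ℤ)
    (hd : Sml (u' - u) (v' - v))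
    (he : Sml (u - w) (v - z))
    (hc1 : u' - w' = u - w) (hc2 : v' - z' = v - z)
    (h00 : ¬(u = 0 ∧ v = 0)) (h10 : ¬(u' = 0 ∧ v' = 0))
    (h01 : ¬(w = 0 ∧ z = 0)) (h11 : ¬(w' = 0 ∧ z' = 0)) :
    c4 u v u' v' - c4 w z w' z' = c4 u v w z - c4 u' v' w' z' := by
  by_cases hdv : v' = v
  · have t1 := c4_null_h u v u' v' hdv
    have t2 : c4 w z w' z' = 0 := c4_null_h _ _ _ _ (by omega)
    by_cases hev : z = v
    · have t3 := c4_null_h u v w z hev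
      have t4 : c4 u' v' w' z' = 0 := c4_null_h _ _ _ _ (by omega)
      omega
    · have hw : w = u := by unfold Sml at he; omega
      have hz : z' = z := by omega
      have hwp : w' = u' := by omega
      have r3 : c4 u v w z = c4 u v u z := by rw [hw]
      have r4 : c4 u' v' w' z' = c4 u' v u' z := by rw [hdv, hwp, hz]
      have t5 : c4 u' v u' z = c4 u v u z :=
        c4_hshift u u' v z (by unfold Sml at hd; omega) (by unfold Sml at hd; omega)
          h00 (by omega) (by omega) (by omega)
      omega
  · have hu' : u' = u := by unfold Sml at hd; omega
    by_cases hev : z = v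
    · have hz' : z' = v' := by omega
      have hw' : w' = w := by omega
      have r1 : c4 u v u' v' = c4 u v u v' := by rw [hu']
      have r2 : c4 w z w' z' = c4 w v w v' := by rw [hw', hev, hz']
      have t3 := c4_null_h u v w z (by omega)
      have t4 : c4 u' v' w' z' = 0 := c4_null_h _ _ _ _ (by omega)
      have t5 : c4 w v w v' = c4 u v u v' :=
        c4_hshift u w v v' (by unfold Sml at he; omega) (by unfold Sml at he; omega)
          h00 (by omega) (by omega) (by omega)
      omega
    · have hw : w = u := by unfold Sml at he; omega
      have hw' : w' = u := by omega
      have r1 : c4 u v u' v' = c4 u v u v' := by rw [hu']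
      have r2 : c4 w z w' z' = c4 u z u z' := by rw [hw, hw']
      have r3 : c4 u v w z = c4 u v u z := by rw [hw]
      have r4 : c4 u' v' w' z' = c4 u v' u z' := by rw [hu', hw']
      have t5 := sq_vert u v v' z z' (by unfold Sml at hd; omega)
        (by unfold Sml at he; omega) hc2 h00
        (by omega) (by omega) (by omega)
      omega

/-- On the left half plane (minus origin), `c4` is the coboundary of `hpot`. -/
lemma pot_h (u v u' v' : ℤ) (hd : Sml (u' - u) (v' - v))
    (hu : u ≤ 0) (hu' : u' ≤ 0)
    (h0 : ¬(u = 0 ∧ v = 0)) (h0' : ¬(u' = 0 ∧ v' = 0)) :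
    c4 u v u' v' = hpot u' v' - hpot u v := by
  unfold Sml at hd
  unfold c4 hpot
  split_ifs <;> omega

/-- On the upper half plane (minus origin), `c4` is the coboundary of `gpot`. -/
lemma pot_g (u v u' v' : ℤ) (hd : Sml (u' - u) (v' - v))
    (hv : 0 ≤ v) (hv' : 0 ≤ v')
    (h0 : ¬(u = 0 ∧ v = 0)) (h0' : ¬(u' = 0 ∧ v' = 0)) :
    c4 u v u' v' = gpot u' v' - gpot u v := by
  unfold Sml at hd
  unfold c4 gpot
  split_ifs <;> omega

lemma c4_zero_low (u v u' v' : ℤ) (hv : v ≤ 0) (hv' : v' ≤ 0) : c4 u v u' v' = 0 := by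
  unfold c4; split_ifs <;> omega

/-- Discrete intermediate value theorem for sequences with steps bounded by 1. -/
lemma ivt_nat (f : ℕ → ℤ) (hstep : ∀ k, f (k + 1) ≤ f k + 1) (N : ℕ) (y : ℤ)
    (h0 : f 0 ≤ y) (hN : y ≤ f N) : ∃ k, k ≤ N ∧ f k = y := by
  induction N with
  | zero => exact ⟨0, le_refl 0, le_antisymm h0 hN⟩
  | succ N ih =>
    by_cases h : y ≤ f N
    · obtain ⟨k, hk, hfk⟩ := ih h
      exact ⟨k, Nat.le_succ_of_le hk, hfk⟩
    · exact ⟨N + 1, le_refl _, by have := hstep N; omega⟩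

/-- Main combinatorial lemma, with walks reindexed over `ℕ`:
two crossing walks inside the rectangle must meet. -/
lemma main_aux (x₁ x₂ y₁ y₂ : ℤ) (n m : ℕ) (P Q : ℕ → ℤ × ℤ)
    (hPs : ∀ k, Sml ((P (k + 1)).1 - (P k).1) ((P (k + 1)).2 - (P k).2))
    (hQs : ∀ l, Sml ((Q (l + 1)).1 - (Q l).1) ((Q (l + 1)).2 - (Q l).2))
    (hP0 : (P 0).2 = y₁) (hPn : (P n).2 = y₂)
    (hPin : ∀ k, inRect x₁ x₂ y₁ y₂ (P k))
    (hQ0 : (Q 0).1 = x₁) (hQm : (Q m).1 = x₂)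
    (hQin : ∀ l, inRect x₁ x₂ y₁ y₂ (Q l))
    (hno : ∀ k l, P k ≠ Q l) : False := by
  have hnz : ∀ k l, ¬((P k).1 - (Q l).1 = 0 ∧ (P k).2 - (Q l).2 = 0) := by
    rintro k l ⟨h1, h2⟩
    exact hno k l (Prod.ext (by omega) (by omega))
  set v1 : ℕ → ℕ → ℤ := fun k l => (P k).1 - (Q l).1 with hv1
  set v2 : ℕ → ℕ → ℤ := fun k l => (P k).2 - (Q l).2 with hv2
  set W : ℕ → ℤ :=
    fun j => ∑ i ∈ Finset.range n, c4 (v1 i j) (v2 i j) (v1 (i+1) j) (v2 (i+1) j) with hW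
  have key1 : ∀ j, W j - W (j+1) =
      c4 (v1 0 j) (v2 0 j) (v1 0 (j+1)) (v2 0 (j+1)) -
      c4 (v1 n j) (v2 n j) (v1 n (j+1)) (v2 n (j+1)) := by
    intro j
    have h1 : W j - W (j+1) = ∑ i ∈ Finset.range n,
        (c4 (v1 i j) (v2 i j) (v1 i (j+1)) (v2 i (j+1)) -
         c4 (v1 (i+1) j) (v2 (i+1) j) (v1 (i+1) (j+1)) (v2 (i+1) (j+1))) := by
      rw [hW, ← Finset.sum_sub_distrib]
      apply Finset.sum_congr rfl
      intro i _
      apply square_id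
      · have := hPs i; simp only [hv1, hv2]; unfold Sml at this ⊢; omega
      · have := hQs j; simp only [hv1, hv2]; unfold Sml at this ⊢; omega
      · simp only [hv1]; ring
      · simp only [hv2]; ring
      · exact hnz i j
      · exact hnz (i+1) j
      · exact hnz i (j+1)
      · exact hnz (i+1) (j+1)
    rw [h1]
    exact Finset.sum_range_sub' (fun i => c4 (v1 i j) (v2 i j) (v1 i (j+1)) (v2 i (j+1))) n
  have key2 : W 0 - W m =
      (∑ j ∈ Finset.range m, c4 (v1 0 j) (v2 0 j) (v1 0 (j+1)) (v2 0 (j+1))) -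
      ∑ j ∈ Finset.range m, c4 (v1 n j) (v2 n j) (v1 n (j+1)) (v2 n (j+1)) := by
    calc W 0 - W m = ∑ j ∈ Finset.range m, (W j - W (j+1)) :=
          (Finset.sum_range_sub' W m).symm
      _ = ∑ j ∈ Finset.range m,
            (c4 (v1 0 j) (v2 0 j) (v1 0 (j+1)) (v2 0 (j+1)) -
             c4 (v1 n j) (v2 n j) (v1 n (j+1)) (v2 n (j+1))) :=
          Finset.sum_congr rfl fun j _ => key1 j
      _ = _ := Finset.sum_sub_distrib _ _
  have hW0 : W 0 = 0 := by
    rw [hW]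
    apply Finset.sum_eq_zero
    intro i _
    apply c4_zero_right
    have h1 := (hPin i).1
    have h2 := hQ0
    simp only [hv1]
    omega
  have hL : (∑ j ∈ Finset.range m, c4 (v1 0 j) (v2 0 j) (v1 0 (j+1)) (v2 0 (j+1))) = 0 := by
    apply Finset.sum_eq_zero
    intro j _
    apply c4_zero_low
    · have h1 := (hQin j).2.2.1; have h2 := hP0; simp only [hv2]; omega
    · have h1 := (hQin (j+1)).2.2.1; have h2 := hP0; simp only [hv2]; omega
  have hWm : W m = hpot (v1 n m) (v2 n m) - hpot (v1 0 m) (v2 0 m) := by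
    have h1 : W m = ∑ i ∈ Finset.range n,
        (hpot (v1 (i+1) m) (v2 (i+1) m) - hpot (v1 i m) (v2 i m)) := by
      rw [hW]
      apply Finset.sum_congr rfl
      intro i _
      apply pot_h
      · have := hPs i; simp only [hv1, hv2]; unfold Sml at this ⊢; omega
      · have h1 := (hPin i).2.1; have h2 := hQm; simp only [hv1]; omega
      · have h1 := (hPin (i+1)).2.1; have h2 := hQm; simp only [hv1]; omega
      · exact hnz i m
      · exact hnz (i+1) m
    rw [h1]
    exact Finset.sum_range_sub (fun i => hpot (v1 i m) (v2 i m)) n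
  have hR : (∑ j ∈ Finset.range m, c4 (v1 n j) (v2 n j) (v1 n (j+1)) (v2 n (j+1))) =
      gpot (v1 n m) (v2 n m) - gpot (v1 n 0) (v2 n 0) := by
    have h1 : ∀ j ∈ Finset.range m,
        c4 (v1 n j) (v2 n j) (v1 n (j+1)) (v2 n (j+1)) =
        gpot (v1 n (j+1)) (v2 n (j+1)) - gpot (v1 n j) (v2 n j) := by
      intro j _
      apply pot_g
      · have := hQs j; simp only [hv1, hv2]; unfold Sml at this ⊢; omega
      · have h1 := (hQin j).2.2.2; have h2 := hPn; simp only [hv2]; omega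
      · have h1 := (hQin (j+1)).2.2.2; have h2 := hPn; simp only [hv2]; omega
      · exact hnz n j
      · exact hnz n (j+1)
    rw [Finset.sum_congr rfl h1]
    exact Finset.sum_range_sub (fun j => gpot (v1 n j) (v2 n j)) m
  have h0m : hpot (v1 0 m) (v2 0 m) = 0 := by
    have h1 := (hQin m).2.2.1
    have h2 := hP0
    unfold hpot
    rw [if_neg]
    simp only [hv2]
    omega
  have hn0 : gpot (v1 n 0) (v2 n 0) = 0 := by
    have h1 := (hPin n).1
    have h2 := hQ0
    unfold gpot
    rw [if_neg]
    simp only [hv1]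
    omega
  rw [hW0, hWm, hL, hR, h0m, hn0] at key2
  have hfin1 : v1 n m ≤ 0 := by
    have h1 := (hPin n).2.1; have h2 := hQm; simp only [hv1]; omega
  have hfin2 : 0 ≤ v2 n m := by
    have h1 := (hQin m).2.2.2; have h2 := hPn; simp only [hv2]; omega
  have hfin3 : ¬(v1 n m = 0 ∧ v2 n m = 0) := by
    simp only [hv1, hv2]; exact hnz n m
  unfold hpot gpot at key2
  split_ifs at key2 <;> omega

/-- Surjectivity of the second coordinate of `p` onto `[y₁, y₂]`. -/
lemma ivt_fin (n : ℕ) (f : Fin (n + 1) → ℤ)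
    (hstep : ∀ i : Fin n, f i.succ ≤ f i.castSucc + 1)
    (y : ℤ) (h0 : f 0 ≤ y) (hn : y ≤ f (Fin.last n)) : ∃ i, f i = y := by
  have key : ∃ k, k ≤ n ∧ f ⟨min k n, by omega⟩ = y := by
    apply ivt_nat (fun k => f ⟨min k n, by omega⟩)
    · intro k
      by_cases hk : k < n
      · have h1 : (⟨min (k+1) n, by omega⟩ : Fin (n+1)) = (⟨k, hk⟩ : Fin n).succ := by
          apply Fin.ext; simp [Fin.succ]; omega
        have h2 : (⟨min k n, by omega⟩ : Fin (n+1)) = (⟨k, hk⟩ : Fin n).castSucc := by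
          apply Fin.ext; simp [Fin.castSucc]; omega
        rw [h1, h2]
        exact hstep ⟨k, hk⟩
      · have h1 : (⟨min (k+1) n, by omega⟩ : Fin (n+1)) = (⟨min k n, by omega⟩ : Fin (n+1)) := by
          apply Fin.ext; simp; omega
        rw [h1]
        omega
    · have h1 : (⟨min 0 n, by omega⟩ : Fin (n+1)) = 0 := by
        apply Fin.ext; simp
      rw [h1]; exact h0
    · have h1 : (⟨min n n, by omega⟩ : Fin (n+1)) = Fin.last n := by
        apply Fin.ext; simp [Fin.last]
      rw [h1]; exact hn
  obtain ⟨k, hk, hfk⟩ := key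
  exact ⟨⟨min k n, by omega⟩, hfk⟩

theorem crossing_segments_intersect (x₁ x₂ y₁ y₂ : ℤ) (hx : x₁ ≤ x₂) (hy : y₁ ≤ y₂)
    (n m : ℕ) (p : Fin (n + 1) → ℤ × ℤ) (q : Fin (m + 1) → ℤ × ℤ)
    (hpstep : ∀ i : Fin n, p i.succ = p i.castSucc ∨ manh (p i.succ) (p i.castSucc) = 1)
    (hqstep : ∀ j : Fin m, q j.succ = q j.castSucc ∨ manh (q j.succ) (q j.castSucc) = 1)
    (hp0 : (p 0).2 = y₁) (hpn : (p (Fin.last n)).2 = y₂)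
    (hpin : ∀ i, inRect x₁ x₂ y₁ y₂ (p i))
    (hq0 : (q 0).1 = x₁) (hqm : (q (Fin.last m)).1 = x₂)
    (hqin : ∀ j, inRect x₁ x₂ y₁ y₂ (q j)) :
    (∃ i j, p i = q j ∧ inRect x₁ x₂ y₁ y₂ (p i)) ∧
    (∀ y, y₁ ≤ y → y ≤ y₂ → ∃ i, (p i).2 = y) ∧
    (∀ x, x₁ ≤ x → x ≤ x₂ → ∃ j, (q j).1 = x) := by
  refine ⟨?_, ?_, ?_⟩
  · by_contra hcon
    push_neg at hcon
    have hno : ∀ i j, p i ≠ q j := fun i j hij => hcon i j hij (hpin i)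
    set P : ℕ → ℤ × ℤ := fun k => p ⟨min k n, by omega⟩ with hPdef
    set Q : ℕ → ℤ × ℤ := fun l => q ⟨min l m, by omega⟩ with hQdef
    have hPs : ∀ k, Sml ((P (k + 1)).1 - (P k).1) ((P (k + 1)).2 - (P k).2) := by
      intro k
      by_cases hk : k < n
      · have h1 : P (k+1) = p (⟨k, hk⟩ : Fin n).succ := by
          simp only [hPdef]; congr 1; apply Fin.ext; simp [Fin.succ]; omega
        have h2 : P k = p (⟨k, hk⟩ : Fin n).castSucc := by
          simp only [hPdef]; congr 1; apply Fin.ext; simp [Fin.castSucc]; omega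
        rw [h1, h2]
        exact sml_of_step (hpstep ⟨k, hk⟩)
      · have h1 : P (k+1) = P k := by
          simp only [hPdef]; congr 2; omega
        rw [h1]; unfold Sml; omega
    have hQs : ∀ l, Sml ((Q (l + 1)).1 - (Q l).1) ((Q (l + 1)).2 - (Q l).2) := by
      intro l
      by_cases hl : l < m
      · have h1 : Q (l+1) = q (⟨l, hl⟩ : Fin m).succ := by
          simp only [hQdef]; congr 1; apply Fin.ext; simp [Fin.succ]; omega
        have h2 : Q l = q (⟨l, hl⟩ : Fin m).castSucc := by
          simp only [hQdef]; congr 1; apply Fin.ext; simp [Fin.castSucc]; omega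
        rw [h1, h2]
        exact sml_of_step (hqstep ⟨l, hl⟩)
      · have h1 : Q (l+1) = Q l := by
          simp only [hQdef]; congr 2; omega
        rw [h1]; unfold Sml; omega
    have hP0 : P 0 = p 0 := by
      simp only [hPdef]; congr 1
    have hPn : P n = p (Fin.last n) := by
      simp only [hPdef]; congr 1; apply Fin.ext; simp [Fin.last]
    have hQ0 : Q 0 = q 0 := by
      simp only [hQdef]; congr 1
    have hQm : Q m = q (Fin.last m) := by
      simp only [hQdef]; congr 1; apply Fin.ext; simp [Fin.last]
    exact main_aux x₁ x₂ y₁ y₂ n m P Q hPs hQs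
      (by rw [hP0]; exact hp0) (by rw [hPn]; exact hpn)
      (fun k => hpin _)
      (by rw [hQ0]; exact hq0) (by rw [hQm]; exact hqm)
      (fun l => hqin _)
      (fun k l => hno _ _)
  · intro y hy1 hy2
    apply ivt_fin n (fun i => (p i).2)
    · intro i
      have := sml_of_step (hpstep i)
      unfold Sml at this
      omega
    · rw [hp0]; exact hy1
    · rw [hpn]; exact hy2
  · intro x hx1 hx2
    apply ivt_fin m (fun j => (q j).1)
    · intro j
      have := sml_of_step (hqstep j)
      unfold Sml at this
      omega
    · rw [hq0]; exact hx1
    · rw [hqm]; exact hx2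
end
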